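/- If a finite family of joint probability distributions {P_{(s₁,...,s_N)}} (with s_n ∈ Fin S_n, outcomes in finite sets Λ_n^{(s_n)}) admits an LHV model, i.e. there is a finite probability space (Ω, ν) and conditional distributions P_n^{(s_n)}(·|ω) with P_{(s₁,...,s_N)}(λ₁,...,λ_N) = Σ_ω ν(ω) ∏_n P_n^{(s_n)}(λ_n|ω), then there exists a single joint probability distribution μ on ∏_{n,s_n} Λ_n^{(s_n)} returning every P_{(s₁,...,s_N)} as the corresponding marginal. -/
import Mathlib

/-- Sum over a finite dependent product of a product of per-coordinate functions
equals the product of the per-coordinate sums. -/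
lemma sum_pi_prod' {ι : Type*} [Fintype ι] [DecidableEq ι] {β : ι → Type*}
    [∀ i, Fintype (β i)] (f : ∀ i, β i → ℝ) :
    ∑ g : ∀ i, β i, ∏ i, f i (g i) = ∏ i, ∑ x, f i x := by
  rw [Finset.prod_univ_sum, Fintype.piFinset_univ]

/-- If a finite family of joint probability distributions admits an LHV model,
then there exists a single joint probability distribution `μ` on the product of
all outcome sets returning every `P_{(s₁,...,s_N)}` as the corresponding marginal. -/
theorem lhv_implies_joint_distribution (N : ℕ) (S : Fin N → ℕ)
    (Λ : (n : Fin N) → Fin (S n) → Type)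
    [∀ n s, Fintype (Λ n s)] [∀ n s, DecidableEq (Λ n s)]
    (P : (s : ∀ n, Fin (S n)) → ((n : Fin N) → Λ n (s n)) → ℝ)
    (Ω : Type) [Fintype Ω] (ν : Ω → ℝ)
    (hν0 : ∀ ω, 0 ≤ ν ω) (hν1 : ∑ ω, ν ω = 1)
    (Pc : (n : Fin N) → (s : Fin (S n)) → Ω → Λ n s → ℝ)
    (hPc0 : ∀ n s ω lam, 0 ≤ Pc n s ω lam)
    (hPc1 : ∀ n s ω, ∑ lam, Pc n s ω lam = 1)
    (hfact : ∀ (s : ∀ n, Fin (S n)) (lam : (n : Fin N) → Λ n (s n)),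
      P s lam = ∑ ω, ν ω * ∏ n, Pc n (s n) ω (lam n)) :
    ∃ μ : ((n : Fin N) → (s : Fin (S n)) → Λ n s) → ℝ,
      (∀ g, 0 ≤ μ g) ∧ (∑ g, μ g = 1) ∧
      ∀ (s : ∀ n, Fin (S n)) (lam : (n : Fin N) → Λ n (s n)),
        P s lam = ∑ g, if (∀ n, g n (s n) = lam n) then μ g else 0 := by
  classical
  refine ⟨fun g => ∑ ω, ν ω * ∏ n, ∏ s', Pc n s' ω (g n s'), ?_, ?_, ?_⟩
  · intro g
    refine Finset.sum_nonneg fun ω _ => mul_nonneg (hν0 ω) ?_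
    exact Finset.prod_nonneg fun n _ => Finset.prod_nonneg fun s' _ => hPc0 n s' ω _
  · rw [Finset.sum_comm]
    have : ∀ ω : Ω, ∑ g : (n : Fin N) → (s : Fin (S n)) → Λ n s,
        ν ω * ∏ n, ∏ s', Pc n s' ω (g n s') = ν ω := by
      intro ω
      rw [← Finset.mul_sum,
        sum_pi_prod' (fun n (gn : ∀ s' : Fin (S n), Λ n s') => ∏ s', Pc n s' ω (gn s'))]
      have : ∀ n : Fin N, (∑ gn : ∀ s' : Fin (S n), Λ n s', ∏ s', Pc n s' ω (gn s')) = 1 := by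
        intro n
        rw [sum_pi_prod' (fun s' x => Pc n s' ω x)]
        simp [hPc1]
      simp [this]
    simp only [this, hν1]
  · intro s lam
    rw [hfact]
    have key : ∀ ω : Ω, (∑ g : (n : Fin N) → (s' : Fin (S n)) → Λ n s',
        if (∀ n, g n (s n) = lam n) then ∏ n, ∏ s', Pc n s' ω (g n s') else 0)
        = ∏ n, Pc n (s n) ω (lam n) := by
      intro ω
      have step1 : ∀ g : (n : Fin N) → (s' : Fin (S n)) → Λ n s',
          (if (∀ n, g n (s n) = lam n) then ∏ n, ∏ s', Pc n s' ω (g n s') else 0)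
          = ∏ n, ((if g n (s n) = lam n then (1:ℝ) else 0) * ∏ s', Pc n s' ω (g n s')) := by
        intro g
        by_cases h : ∀ n, g n (s n) = lam n
        · simp [h]
        · push_neg at h
          obtain ⟨n0, hn0⟩ := h
          rw [if_neg (by push_neg; exact ⟨n0, hn0⟩)]
          symm
          refine Finset.prod_eq_zero (Finset.mem_univ n0) ?_
          simp [hn0]
      simp only [step1]
      rw [sum_pi_prod' (fun n (gn : ∀ s' : Fin (S n), Λ n s') =>
        (if gn (s n) = lam n then (1:ℝ) else 0) * ∏ s', Pc n s' ω (gn s'))]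
      refine Finset.prod_congr rfl fun n _ => ?_
      -- per-party computation
      have hsummand : ∀ gn : ∀ s' : Fin (S n), Λ n s',
          (if gn (s n) = lam n then (1:ℝ) else 0) * ∏ s', Pc n s' ω (gn s')
          = ∏ s', (fun s' (x : Λ n s') =>
              (if hx : s' = s n then (if hx ▸ x = lam n then (1:ℝ) else 0) else 1)
                * Pc n s' ω x) s' (gn s') := by
        intro gn
        rw [Finset.prod_mul_distrib]
        congr 1
        rw [Finset.prod_eq_single (s n)]
        · simp
        · intro s' _ hs'; simp [hs']
        · simp
      simp only [hsummand]
      rw [sum_pi_prod' (fun s' (x : Λ n s') =>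
        (if hx : s' = s n then (if hx ▸ x = lam n then (1:ℝ) else 0) else 1) * Pc n s' ω x)]
      rw [Finset.prod_eq_single (s n)]
      · simp [Finset.sum_ite_eq']
      · intro s' _ hs'
        simp [hs', hPc1]
      · simp
    have expand : ∀ g : (n : Fin N) → (s' : Fin (S n)) → Λ n s',
        (if (∀ n, g n (s n) = lam n) then
          ∑ ω, ν ω * ∏ n, ∏ s', Pc n s' ω (g n s') else 0)
        = ∑ ω, ν ω * (if (∀ n, g n (s n) = lam n) then ∏ n, ∏ s', Pc n s' ω (g n s') else 0) := by
      intro g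
      by_cases h : ∀ n, g n (s n) = lam n <;> simp [h]
    simp only [expand]
    rw [Finset.sum_comm]
    refine Finset.sum_congr rfl fun ω _ => ?_
    rw [← Finset.mul_sum, key ω]
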